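/- For g ≥ 2, let G_H±(g) be the presented group with generators t_1,…,t_{2g+1}, ρ, s and defining relations: t_k t_j = t_j t_k for |k−j| > 1; t_j t_{j+1} t_j = t_{j+1} t_j t_{j+1} for j = 1,…,2g; (t_1 t_2 ⋯ t_{2g+1})^{2g+2} = 1; ρ = t_1 t_2 ⋯ t_{2g+1} t_{2g+1} ⋯ t_2 t_1; ρ² = 1; ρ t_1 ρ = t_1; s² = 1; s t_1 s = t_1^{−1}; and ρ s ρ = s. Then the abelianization of G_H±(g) is isomorphic to Z/2 ⊕ Z/2, generated by the images of t_1 and s. -/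

import Mathlib

open FreeGroup in
/-- The relations for the extended hyperelliptic mapping class group `M^{h±}(S_g)`:
the Birman–Hilden relations together with `s² = 1`, `s t_1 s = t_1⁻¹`, `ρ s ρ = s`.
The generator `Sum.inl i` is `t_{i+1}` (`i : Fin (2g+1)`), `Sum.inr true` is `ρ` and
`Sum.inr false` is `s`. -/
def relsHpm (g : ℕ) : Set (FreeGroup (Fin (2*g+1) ⊕ Bool)) :=
  -- t_k t_j = t_j t_k for |k-j| > 1
  {r | ∃ j k : Fin (2*g+1), ((j : ℕ) + 1 < k ∨ (k : ℕ) + 1 < j) ∧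
        r = of (.inl k) * of (.inl j) * (of (.inl j) * of (.inl k))⁻¹} ∪
  -- braid relations
  {r | ∃ j k : Fin (2*g+1), (j : ℕ) + 1 = k ∧
        r = of (.inl j) * of (.inl k) * of (.inl j) *
            (of (.inl k) * of (.inl j) * of (.inl k))⁻¹} ∪
  -- (t_1 ⋯ t_{2g+1})^{2g+2} = 1
  {(List.ofFn (fun i : Fin (2*g+1) => of (Sum.inl i : Fin (2*g+1) ⊕ Bool))).prod ^ (2*g+2)} ∪
  -- ρ = t_1 ⋯ t_{2g+1} t_{2g+1} ⋯ t_1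
  {(List.ofFn (fun i : Fin (2*g+1) => of (Sum.inl i : Fin (2*g+1) ⊕ Bool))).prod *
      ((List.ofFn (fun i : Fin (2*g+1) => of (Sum.inl i : Fin (2*g+1) ⊕ Bool))).reverse).prod *
      (of (Sum.inr true : Fin (2*g+1) ⊕ Bool))⁻¹} ∪
  -- ρ² = 1
  {of (Sum.inr true : Fin (2*g+1) ⊕ Bool) ^ 2} ∪
  -- ρ t_1 ρ = t_1
  {of (Sum.inr true : Fin (2*g+1) ⊕ Bool) * of (.inl 0) * of (.inr true) * (of (.inl 0))⁻¹} ∪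
  -- s² = 1
  {of (Sum.inr false : Fin (2*g+1) ⊕ Bool) ^ 2} ∪
  -- s t_1 s = t_1⁻¹
  {of (Sum.inr false : Fin (2*g+1) ⊕ Bool) * of (.inl 0) * of (.inr false) * of (.inl 0)} ∪
  -- ρ s ρ = s
  {of (Sum.inr true : Fin (2*g+1) ⊕ Bool) * of (.inr false) * of (.inr true) *
      (of (.inr false))⁻¹}

/-- `G_H±(g)`, a presentation of the extended hyperelliptic mapping class group
`M^{h±}(S_g)`. -/
def GHpm (g : ℕ) : Type := PresentedGroup (relsHpm g)

instance (g : ℕ) : Group (GHpm g) := by unfold GHpm; infer_instance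

/-- The generator `t_{i+1}` of `G_H±(g)`. -/
def GHpm.t {g : ℕ} (i : Fin (2*g+1)) : GHpm g :=
  PresentedGroup.of (rels := relsHpm g) (Sum.inl i)

/-- The generator `s` of `G_H±(g)`. -/
def GHpm.s (g : ℕ) : GHpm g := PresentedGroup.of (rels := relsHpm g) (Sum.inr false)

namespace Stmt15Aux

open FreeGroup

abbrev M : Type := Multiplicative (ZMod 2 × ZMod 2)

def φf (g : ℕ) : Fin (2*g+1) ⊕ Bool → M
  | .inl _ => Multiplicative.ofAdd (1, 0)
  | .inr true => 1
  | .inr false => Multiplicative.ofAdd (0, 1)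

lemma φ_rels (g : ℕ) : ∀ r ∈ relsHpm g, FreeGroup.lift (φf g) r = 1 := by
  have ha : (Multiplicative.ofAdd ((1 : ZMod 2), (0 : ZMod 2))) ^ 2 = 1 := by decide
  have hb : (Multiplicative.ofAdd ((0 : ZMod 2), (1 : ZMod 2))) ^ 2 = 1 := by decide
  have hP : FreeGroup.lift (φf g)
      (List.ofFn (fun i : Fin (2*g+1) => of (Sum.inl i : Fin (2*g+1) ⊕ Bool))).prod =
      (Multiplicative.ofAdd ((1 : ZMod 2), (0 : ZMod 2))) ^ (2*g+1) := by
    rw [map_list_prod, List.map_ofFn]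
    simp [Function.comp, φf, List.ofFn_const, List.prod_replicate, pow_succ', pow_succ]
  have heven : ∀ n : ℕ, (Multiplicative.ofAdd ((1 : ZMod 2), (0 : ZMod 2))) ^ (2*n) = 1 := by
    intro n; rw [pow_mul, ha, one_pow]
  rintro r ((((((( (⟨j,k,_,rfl⟩ | ⟨j,k,_,rfl⟩) | rfl) | rfl) | rfl) | rfl) | rfl) | rfl) | rfl)
  · simp only [_root_.map_mul, _root_.map_inv, lift_apply_of, φf]; decide
  · simp only [_root_.map_mul, _root_.map_inv, lift_apply_of, φf]; decide
  · rw [map_pow, hP, ← pow_mul]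
    have : (2*g+1) * (2*g+2) = 2 * ((2*g+1)*(g+1)) := by ring
    rw [this, heven]
  · rw [_root_.map_mul, _root_.map_mul, _root_.map_inv, hP, map_list_prod, List.map_reverse,
      List.prod_reverse, List.map_ofFn]
    simp only [Function.comp_def, φf, lift_apply_of]
    rw [List.ofFn_const, List.prod_replicate, ← pow_add]
    have : (2*g+1) + (2*g+1) = 2 * (2*g+1) := by ring
    simp [this, heven]
  · simp only [map_pow, lift_apply_of, φf]; decide
  · simp only [_root_.map_mul, _root_.map_inv, lift_apply_of, φf]; decide
  · simp only [map_pow, lift_apply_of, φf]; decide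
  · simp only [_root_.map_mul, lift_apply_of, φf]; decide
  · simp only [_root_.map_mul, _root_.map_inv, lift_apply_of, φf]; decide

def φ (g : ℕ) : GHpm g →* M := PresentedGroup.toGroup (φ_rels g)

def φab (g : ℕ) : Abelianization (GHpm g) →* M := Abelianization.lift (φ g)

/-- image of the free group in the abelianization -/
def F (g : ℕ) : FreeGroup (Fin (2*g+1) ⊕ Bool) →* Abelianization (GHpm g) :=
  (Abelianization.of (G := GHpm g)).comp (PresentedGroup.mk (relsHpm g))

lemma F_rel {g : ℕ} {r} (hr : r ∈ relsHpm g) : F g r = 1 := by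
  have : PresentedGroup.mk (relsHpm g) r = 1 :=
    (QuotientGroup.eq_one_iff r).2 (Subgroup.subset_normalClosure hr)
  show Abelianization.of ((PresentedGroup.mk (relsHpm g)) r) = 1
  rw [this, _root_.map_one]

lemma F_of {g : ℕ} (x) :
    F g (of x) = Abelianization.of (PresentedGroup.of (rels := relsHpm g) x) := rfl


variable {g : ℕ}

/-- image of `t_{i+1}` in the abelianization -/
def a (g : ℕ) (i : Fin (2*g+1)) : Abelianization (GHpm g) := Abelianization.of (GHpm.t i)

/-- image of `s` in the abelianization -/
def b (g : ℕ) : Abelianization (GHpm g) := Abelianization.of (GHpm.s g)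

/-- image of `ρ` in the abelianization -/
def c (g : ℕ) : Abelianization (GHpm g) :=
  Abelianization.of (PresentedGroup.of (rels := relsHpm g) (Sum.inr true))

lemma F_of_inl (i : Fin (2*g+1)) : F g (of (Sum.inl i)) = a g i := rfl
lemma F_of_inr_false : F g (of (Sum.inr false)) = b g := rfl
lemma F_of_inr_true : F g (of (Sum.inr true)) = c g := rfl

lemma b_sq : b g ^ 2 = 1 := by
  have h := F_rel (g := g)
    (show (of (Sum.inr false) ^ 2 : FreeGroup (Fin (2*g+1) ⊕ Bool)) ∈ relsHpm g from
      Or.inl (Or.inl (Or.inr rfl)))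
  rwa [map_pow, F_of_inr_false] at h

lemma a0_sq : a g 0 ^ 2 = 1 := by
  have h := F_rel (g := g)
    (show (of (Sum.inr false) * of (Sum.inl 0) * of (Sum.inr false) * of (Sum.inl 0) :
        FreeGroup (Fin (2*g+1) ⊕ Bool)) ∈ relsHpm g from Or.inl (Or.inr rfl))
  rw [_root_.map_mul, _root_.map_mul, _root_.map_mul, F_of_inr_false, F_of_inl] at h
  have h2 : (b g * b g) * (a g 0 * a g 0) = 1 := by
    rw [← mul_mul_mul_comm, ← mul_assoc, h]
  have hb : b g * b g = 1 := by rw [← pow_two]; exact b_sq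
  rw [hb, one_mul, ← pow_two] at h2
  exact h2

lemma braid_eq {j k : Fin (2*g+1)} (h : (j : ℕ) + 1 = k) : a g j = a g k := by
  have hrel := F_rel (g := g)
    (show (of (Sum.inl j) * of (Sum.inl k) * of (Sum.inl j) *
        (of (Sum.inl k) * of (Sum.inl j) * of (Sum.inl k))⁻¹ :
        FreeGroup (Fin (2*g+1) ⊕ Bool)) ∈ relsHpm g from
      Or.inl (Or.inl (Or.inl (Or.inl (Or.inl (Or.inl (Or.inl (Or.inr ⟨j, k, h, rfl⟩))))))))
  simp only [_root_.map_mul, _root_.map_inv, F_of_inl, mul_inv_eq_one] at hrel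
  rw [mul_assoc, mul_assoc, mul_comm (a g k) (a g j)] at hrel
  exact mul_right_cancel hrel

lemma t_eq (i : Fin (2*g+1)) : a g i = a g 0 := by
  obtain ⟨n, hn⟩ := i
  induction n with
  | zero => congr 1
  | succ m ih =>
    have hm : m < 2*g+1 := Nat.lt_of_succ_lt hn
    rw [← braid_eq (j := ⟨m, hm⟩) (k := ⟨m+1, hn⟩) rfl]
    exact ih hm

lemma ai_sq (i : Fin (2*g+1)) : a g i ^ 2 = 1 := by rw [t_eq]; exact a0_sq

lemma c_eq_one : c g = 1 := by
  have hrel := F_rel (g := g)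
    (show ((List.ofFn (fun i : Fin (2*g+1) => of (Sum.inl i : Fin (2*g+1) ⊕ Bool))).prod *
        ((List.ofFn (fun i : Fin (2*g+1) => of (Sum.inl i : Fin (2*g+1) ⊕ Bool))).reverse).prod *
        (of (Sum.inr true : Fin (2*g+1) ⊕ Bool))⁻¹ :
        FreeGroup (Fin (2*g+1) ⊕ Bool)) ∈ relsHpm g from
      Or.inl (Or.inl (Or.inl (Or.inl (Or.inl (Or.inr rfl))))))
  have hP : F g (List.ofFn (fun i : Fin (2*g+1) =>
      of (Sum.inl i : Fin (2*g+1) ⊕ Bool))).prod = a g 0 ^ (2*g+1) := by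
    rw [map_list_prod, List.map_ofFn]
    simp only [Function.comp_def, F_of_inl, t_eq]
    rw [List.ofFn_const, List.prod_replicate]
  have hQ : F g ((List.ofFn (fun i : Fin (2*g+1) =>
      of (Sum.inl i : Fin (2*g+1) ⊕ Bool))).reverse).prod = a g 0 ^ (2*g+1) := by
    rw [map_list_prod, List.map_reverse, List.prod_reverse, ← map_list_prod, hP]
  rw [_root_.map_mul, _root_.map_mul, _root_.map_inv, F_of_inr_true, hP, hQ,
    mul_inv_eq_one] at hrel
  rw [← hrel, ← pow_two, ← pow_mul, mul_comm (2*g+1) 2, pow_mul, a0_sq, one_pow]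


lemma pow_val_two {A : Type*} [Monoid A] (x : A) (hx : x ^ 2 = 1) (n : ℕ) :
    x ^ (n % 2) = x ^ n := by
  conv_rhs => rw [← Nat.div_add_mod n 2]
  rw [pow_add, pow_mul, hx, one_pow, one_mul]

/-- The inverse homomorphism `ℤ/2 × ℤ/2 → A` sending the generators to `x` and `y`. -/
def ψ {A : Type*} [CommGroup A] (x y : A) (hx : x ^ 2 = 1) (hy : y ^ 2 = 1) : M →* A where
  toFun m := x ^ (m.toAdd.1.val) * y ^ (m.toAdd.2.val)
  map_one' := by
    show x ^ ((0 : ZMod 2)).val * y ^ ((0 : ZMod 2)).val = 1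
    simp
  map_mul' m n := by
    show x ^ ((m.toAdd.1 + n.toAdd.1).val) * y ^ ((m.toAdd.2 + n.toAdd.2).val) = _
    rw [ZMod.val_add, ZMod.val_add, pow_val_two x hx, pow_val_two y hy, pow_add, pow_add,
      mul_mul_mul_comm]

lemma φab_a0 : φab g (a g 0) = Multiplicative.ofAdd ((1 : ZMod 2), (0 : ZMod 2)) := by
  show φab g (Abelianization.of (PresentedGroup.of (rels := relsHpm g) (Sum.inl 0))) = _
  erw [φab, Abelianization.lift_apply_of, φ]

lemma φab_b : φab g (b g) = Multiplicative.ofAdd ((0 : ZMod 2), (1 : ZMod 2)) := by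
  show φab g (Abelianization.of (PresentedGroup.of (rels := relsHpm g) (Sum.inr false))) = _
  erw [φab, Abelianization.lift_apply_of, φ]

/-- The abelianization of `GHpm g` is `ℤ/2 × ℤ/2`. -/
noncomputable def abEquiv (g : ℕ) : Abelianization (GHpm g) ≃* M := by
  refine MonoidHom.toMulEquiv (φab g) (ψ (a g 0) (b g) a0_sq b_sq) ?_ ?_
  · apply Abelianization.hom_ext
    apply PresentedGroup.ext
    intro x
    have hx : ∀ z : Fin (2*g+1) ⊕ Bool,
        (((ψ (a g 0) (b g) a0_sq b_sq).comp (φab g)).comp Abelianization.of)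
          (PresentedGroup.of (rels := relsHpm g) z) =
        ψ (a g 0) (b g) a0_sq b_sq (φf g z) := by
      intro z
      show ψ (a g 0) (b g) a0_sq b_sq (φab g (Abelianization.of (PresentedGroup.of (rels := relsHpm g) z))) = _
      erw [φab, Abelianization.lift_apply_of, φ]
      exact congrArg _ (PresentedGroup.toGroup.of (φ_rels g))
    rcases x with i | bb
    · refine (hx _).trans ?_
      show a g 0 ^ ((1 : ZMod 2)).val * b g ^ ((0 : ZMod 2)).val =
        Abelianization.of (PresentedGroup.of (rels := relsHpm g) (Sum.inl i))
      rw [ZMod.val_one, ZMod.val_zero, pow_one, pow_zero, mul_one]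
      exact (t_eq i).symm
    · rcases bb with _ | _
      · refine (hx _).trans ?_
        show a g 0 ^ ((0 : ZMod 2)).val * b g ^ ((1 : ZMod 2)).val =
          Abelianization.of (PresentedGroup.of (rels := relsHpm g) (Sum.inr false))
        rw [ZMod.val_one, ZMod.val_zero, pow_one, pow_zero, one_mul]
        rfl
      · refine (hx _).trans ?_
        show ψ (a g 0) (b g) a0_sq b_sq 1 =
          Abelianization.of (PresentedGroup.of (rels := relsHpm g) (Sum.inr true))
        rw [_root_.map_one]
        exact c_eq_one.symm
  · apply MonoidHom.ext
    intro m
    show φab g (a g 0 ^ (m.toAdd.1.val) * b g ^ (m.toAdd.2.val)) = m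
    rw [_root_.map_mul, map_pow, map_pow, φab_a0, φab_b]
    revert m
    decide

lemma closure_eq_top (g : ℕ) :
    Subgroup.closure {Abelianization.of (GHpm.t (0 : Fin (2*g+1))),
      Abelianization.of (GHpm.s g)} = ⊤ := by
  rw [Subgroup.eq_top_iff']
  intro y
  have hK : ∀ j : Fin (2*g+1) ⊕ Bool, PresentedGroup.of (rels := relsHpm g) j ∈
      (Subgroup.closure {Abelianization.of (GHpm.t (0 : Fin (2*g+1))),
        Abelianization.of (GHpm.s g)}).comap
        (Abelianization.of : GHpm g →* Abelianization (GHpm g)) := by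
    have hcl : ∀ z : Abelianization (GHpm g),
        z ∈ Subgroup.closure {Abelianization.of (GHpm.t (0 : Fin (2*g+1))),
          Abelianization.of (GHpm.s g)} →
        ∀ w, w = z → w ∈ Subgroup.closure {Abelianization.of (GHpm.t (0 : Fin (2*g+1))),
          Abelianization.of (GHpm.s g)} := by
      rintro z hz w rfl; exact hz
    rintro (i | _ | _)
    · refine Subgroup.mem_comap.2 (hcl _ (Subgroup.subset_closure (Set.mem_insert _ _)) _ ?_)
      exact t_eq i
    · exact Subgroup.mem_comap.2 (Subgroup.subset_closure (Set.mem_insert_of_mem _ rfl))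
    · refine Subgroup.mem_comap.2 (hcl 1 (Subgroup.one_mem _) _ ?_)
      exact c_eq_one
  refine QuotientGroup.induction_on y ?_
  intro x
  exact PresentedGroup.generated_by (relsHpm g) _ hK x

end Stmt15Aux

open Stmt15Aux in
/-- `H_1(M^{h±}(S_g)) = ℤ/2 ⊕ ℤ/2`, generated by the images of `t_1` and `s`. -/
theorem stmt15 (g : ℕ) (hg : 2 ≤ g) :
    Nonempty (Abelianization (GHpm g) ≃* Multiplicative (ZMod 2 × ZMod 2)) ∧
    Subgroup.closure
      {Abelianization.of (GHpm.t (0 : Fin (2*g+1))),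
       Abelianization.of (GHpm.s g)} = ⊤ := by
  exact ⟨⟨abEquiv g⟩, closure_eq_top g⟩
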